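/- Let A be a finite-dimensional lozenge algebra with Laplacian Δ = dd* + d*d (adjoints taken with respect to the inner products). Then harmonicity is characterized in each degree as follows: for a ∈ A⁰, Δa = 0 ⇔ ∂a = 0 ⇔ ∂̄a = 0; for a ∈ A^{1,0}, Δa = 0 ⇔ ∂*a = 0 ⇔ ∂̄a = 0; for a ∈ A^{0,1}, Δa = 0 ⇔ ∂a = 0 ⇔ ∂̄*a = 0; for a ∈ A², Δa = 0 ⇔ ∂*a = 0 ⇔ ∂̄*a = 0. -/
import Mathlib


/-- A lozenge algebra: a ℤ-graded unital associative ℂ-algebra `A = A⁰ ⊕ A¹ ⊕ A²`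
concentrated in degrees 0,1,2 (with `A¹ = A^{1,0} ⊕ A^{0,1}`), equipped with a degree 1
derivation `d` with `d² = 0`, a central curvature `θ ∈ A²`, a ℂ-antilinear involution
`*`, a trace `τ : A² → ℂ` (extended by `0` to all of `A`), a Kähler element `ω ∈ A²`
with inverse Lefschetz operator `Λ` (extended by `0` on `A⁰ ⊕ A¹`), positive definite
Hermitian forms on each graded piece, and the Yang–Mills condition `d(Λθ) = 0`. -/
structure LozengeAlgebra (A : Type*) [Ring A] [Algebra ℂ A] where
  A0 : Submodule ℂ A
  A10 : Submodule ℂ A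
  A01 : Submodule ℂ A
  A2 : Submodule ℂ A
  p0 : A →ₗ[ℂ] A
  p10 : A →ₗ[ℂ] A
  p01 : A →ₗ[ℂ] A
  p2 : A →ₗ[ℂ] A
  d : A →ₗ[ℂ] A
  Lam : A →ₗ[ℂ] A
  st : A → A
  tau : A →ₗ[ℂ] ℂ
  theta : A
  omega : A
  -- the projections realize the direct sum decomposition A = A⁰ ⊕ A^{1,0} ⊕ A^{0,1} ⊕ A²
  p0_mem : ∀ x : A, p0 x ∈ A0
  p10_mem : ∀ x : A, p10 x ∈ A10
  p01_mem : ∀ x : A, p01 x ∈ A01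
  p2_mem : ∀ x : A, p2 x ∈ A2
  decomp : ∀ x : A, p0 x + p10 x + p01 x + p2 x = x
  proj_eq : ∀ x0 ∈ A0, ∀ x10 ∈ A10, ∀ x01 ∈ A01, ∀ x2 ∈ A2,
    p0 (x0 + x10 + x01 + x2) = x0 ∧ p10 (x0 + x10 + x01 + x2) = x10 ∧
    p01 (x0 + x10 + x01 + x2) = x01 ∧ p2 (x0 + x10 + x01 + x2) = x2
  -- multiplicative grading
  one_mem : (1 : A) ∈ A0
  mul00 : ∀ a ∈ A0, ∀ b ∈ A0, a * b ∈ A0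
  mul0_10 : ∀ a ∈ A0, ∀ b ∈ A10, a * b ∈ A10 ∧ b * a ∈ A10
  mul0_01 : ∀ a ∈ A0, ∀ b ∈ A01, a * b ∈ A01 ∧ b * a ∈ A01
  mul0_2 : ∀ a ∈ A0, ∀ b ∈ A2, a * b ∈ A2 ∧ b * a ∈ A2
  mul10_10 : ∀ a ∈ A10, ∀ b ∈ A10, a * b = 0
  mul10_01 : ∀ a ∈ A10, ∀ b ∈ A01, a * b ∈ A2 ∧ b * a ∈ A2
  mul01_01 : ∀ a ∈ A01, ∀ b ∈ A01, a * b ∈ A2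
  mul1_2 : ∀ a : A, (a ∈ A10 ∨ a ∈ A01) → ∀ b ∈ A2, a * b = 0 ∧ b * a = 0
  mul2_2 : ∀ a ∈ A2, ∀ b ∈ A2, a * b = 0
  -- the differential
  d0_mem : ∀ x ∈ A0, p10 (d x) + p01 (d x) = d x
  d10_mem : ∀ x ∈ A10, d x ∈ A2
  d01_mem : ∀ x ∈ A01, d x ∈ A2
  d2_zero : ∀ x ∈ A2, d x = 0
  d_sq : ∀ x : A, d (d x) = 0
  leibniz0 : ∀ a ∈ A0, ∀ b : A, d (a * b) = d a * b + a * d b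
  leibniz1 : ∀ a : A, (a ∈ A10 ∨ a ∈ A01) → ∀ b : A, d (a * b) = d a * b - a * d b
  leibniz2 : ∀ a ∈ A2, ∀ b : A, d (a * b) = d a * b + a * d b
  -- the curvature
  theta_mem : theta ∈ A2
  theta_central : ∀ a : A, theta * a = a * theta
  -- the ℂ-antilinear involution
  st_add : ∀ x y : A, st (x + y) = st x + st y
  st_smul : ∀ (c : ℂ) (x : A), st (c • x) = (starRingEnd ℂ c) • st x
  st_invol : ∀ x : A, st (st x) = x
  st_one : st 1 = 1
  st_mem0 : ∀ x ∈ A0, st x ∈ A0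
  st_mem10 : ∀ x ∈ A10, st x ∈ A01
  st_mem01 : ∀ x ∈ A01, st x ∈ A10
  st_mem2 : ∀ x ∈ A2, st x ∈ A2
  st_mul0 : ∀ a ∈ A0, ∀ b : A, st (a * b) = st b * st a ∧ st (b * a) = st a * st b
  st_mul1 : ∀ a b : A, (a ∈ A10 ∨ a ∈ A01) → (b ∈ A10 ∨ b ∈ A01) →
    st (a * b) = -(st b * st a)
  st_d : ∀ x : A, st (d x) = d (st x)
  st_theta : st theta = -theta
  -- the trace
  tau_zero0 : ∀ x ∈ A0, tau x = 0
  tau_zero10 : ∀ x ∈ A10, tau x = 0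
  tau_zero01 : ∀ x ∈ A01, tau x = 0
  tau_comm0 : ∀ a ∈ A0, ∀ b : A, tau (a * b) = tau (b * a)
  tau_anticomm1 : ∀ a b : A, (a ∈ A10 ∨ a ∈ A01) → (b ∈ A10 ∨ b ∈ A01) →
    tau (a * b) = -tau (b * a)
  tau_d : ∀ x : A, tau (d x) = 0
  tau_star : ∀ x ∈ A2, tau (st x) = starRingEnd ℂ (tau x)
  -- the Kähler element and the Lefschetz operators
  omega_mem : omega ∈ A2
  omega_st : st omega = omega
  omega_comm : ∀ a ∈ A0, omega * a = a * omega
  Lam_mem : ∀ x : A, Lam x ∈ A0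
  Lam_zero0 : ∀ x ∈ A0, Lam x = 0
  Lam_zero10 : ∀ x ∈ A10, Lam x = 0
  Lam_zero01 : ∀ x ∈ A01, Lam x = 0
  Lam_left_inv : ∀ a ∈ A0, Lam (omega * a) = a
  Lam_right_inv : ∀ b ∈ A2, omega * Lam b = b
  -- positive definiteness of the four Hermitian forms
  pos0 : ∀ a ∈ A0, a ≠ 0 →
    0 < (tau (omega * (st a * a))).re ∧ (tau (omega * (st a * a))).im = 0
  pos10 : ∀ a ∈ A10, a ≠ 0 →
    0 < (-Complex.I * tau (st a * a)).re ∧ (-Complex.I * tau (st a * a)).im = 0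
  pos01 : ∀ a ∈ A01, a ≠ 0 →
    0 < (Complex.I * tau (st a * a)).re ∧ (Complex.I * tau (st a * a)).im = 0
  pos2 : ∀ a ∈ A2, a ≠ 0 →
    0 < (tau (omega * (st (Lam a) * Lam a))).re ∧
      (tau (omega * (st (Lam a) * Lam a))).im = 0
  -- the Yang–Mills condition
  ym : d (Lam theta) = 0

namespace LozengeAlgebra

variable {A : Type*} [Ring A] [Algebra ℂ A] (Lz : LozengeAlgebra A)

/-- The operator `∂` (the `A^{1,0}`-component of `d` on `A⁰`, and `d` on `A^{0,1}`). -/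
def del (x : A) : A := Lz.p10 (Lz.d (Lz.p0 x)) + Lz.d (Lz.p01 x)

/-- The operator `∂̄` (the `A^{0,1}`-component of `d` on `A⁰`, and `d` on `A^{1,0}`). -/
def delbar (x : A) : A := Lz.p01 (Lz.d (Lz.p0 x)) + Lz.d (Lz.p10 x)

/-- The total inner product on `A = A⁰ ⊕ A^{1,0} ⊕ A^{0,1} ⊕ A²`, the orthogonal sum of
the Hermitian forms `τ(ω a* b)` on `A⁰`, `−iτ(a* b)` on `A^{1,0}`, `iτ(a* b)` on
`A^{0,1}`, and `τ(ω Λ(a)* Λ(b))` on `A²`. -/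
noncomputable def innerL (u v : A) : ℂ :=
  Lz.tau (Lz.omega * (Lz.st (Lz.p0 u) * Lz.p0 v))
    + (-Complex.I) * Lz.tau (Lz.st (Lz.p10 u) * Lz.p10 v)
    + Complex.I * Lz.tau (Lz.st (Lz.p01 u) * Lz.p01 v)
    + Lz.tau (Lz.omega * (Lz.st (Lz.Lam (Lz.p2 u)) * Lz.Lam (Lz.p2 v)))

end LozengeAlgebra

namespace LozengeAlgebra

open Complex

variable {A : Type*} [Ring A] [Algebra ℂ A] (Lz : LozengeAlgebra A)

lemma st_zero : Lz.st 0 = 0 := by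
  have h := Lz.st_add 0 0
  simp only [add_zero] at h
  exact (add_eq_right.mp h.symm)

lemma proj_of_mem0 {x : A} (h : x ∈ Lz.A0) :
    Lz.p0 x = x ∧ Lz.p10 x = 0 ∧ Lz.p01 x = 0 ∧ Lz.p2 x = 0 := by
  have h2 := Lz.proj_eq x h 0 (zero_mem _) 0 (zero_mem _) 0 (zero_mem _)
  simpa using h2

lemma proj_of_mem10 {x : A} (h : x ∈ Lz.A10) :
    Lz.p0 x = 0 ∧ Lz.p10 x = x ∧ Lz.p01 x = 0 ∧ Lz.p2 x = 0 := by
  have h2 := Lz.proj_eq 0 (zero_mem _) x h 0 (zero_mem _) 0 (zero_mem _)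
  simpa using h2

lemma proj_of_mem01 {x : A} (h : x ∈ Lz.A01) :
    Lz.p0 x = 0 ∧ Lz.p10 x = 0 ∧ Lz.p01 x = x ∧ Lz.p2 x = 0 := by
  have h2 := Lz.proj_eq 0 (zero_mem _) 0 (zero_mem _) x h 0 (zero_mem _)
  simpa using h2

lemma proj_of_mem2 {x : A} (h : x ∈ Lz.A2) :
    Lz.p0 x = 0 ∧ Lz.p10 x = 0 ∧ Lz.p01 x = 0 ∧ Lz.p2 x = x := by
  have h2 := Lz.proj_eq 0 (zero_mem _) 0 (zero_mem _) 0 (zero_mem _) x h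
  simpa using h2

lemma proj_st (x : A) :
    Lz.p0 (Lz.st x) = Lz.st (Lz.p0 x) ∧ Lz.p10 (Lz.st x) = Lz.st (Lz.p01 x) ∧
    Lz.p01 (Lz.st x) = Lz.st (Lz.p10 x) ∧ Lz.p2 (Lz.st x) = Lz.st (Lz.p2 x) := by
  have hsum : Lz.st (Lz.p0 x) + Lz.st (Lz.p01 x) + Lz.st (Lz.p10 x) + Lz.st (Lz.p2 x)
      = Lz.st x := by
    rw [← Lz.st_add, ← Lz.st_add, ← Lz.st_add]
    congr 1
    have h := Lz.decomp x
    have h2 : Lz.p0 x + Lz.p01 x + Lz.p10 x + Lz.p2 x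
        = Lz.p0 x + Lz.p10 x + Lz.p01 x + Lz.p2 x := by abel
    rw [h2, h]
  have h := Lz.proj_eq _ (Lz.st_mem0 _ (Lz.p0_mem x)) _ (Lz.st_mem01 _ (Lz.p01_mem x))
    _ (Lz.st_mem10 _ (Lz.p10_mem x)) _ (Lz.st_mem2 _ (Lz.p2_mem x))
  rw [hsum] at h
  exact h

lemma proj_d (x : A) :
    Lz.p0 (Lz.d x) = 0 ∧ Lz.p10 (Lz.d x) = Lz.p10 (Lz.d (Lz.p0 x)) ∧
    Lz.p01 (Lz.d x) = Lz.p01 (Lz.d (Lz.p0 x)) ∧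
    Lz.p2 (Lz.d x) = Lz.d (Lz.p10 x) + Lz.d (Lz.p01 x) := by
  have hsum : (0 : A) + Lz.p10 (Lz.d (Lz.p0 x)) + Lz.p01 (Lz.d (Lz.p0 x))
      + (Lz.d (Lz.p10 x) + Lz.d (Lz.p01 x)) = Lz.d x := by
    have h0 := Lz.d0_mem _ (Lz.p0_mem x)
    have h2 := Lz.d2_zero _ (Lz.p2_mem x)
    have hd : Lz.d x = Lz.d (Lz.p0 x) + Lz.d (Lz.p10 x) + Lz.d (Lz.p01 x)
        + Lz.d (Lz.p2 x) := by
      rw [← map_add, ← map_add, ← map_add, Lz.decomp]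
    conv_rhs => rw [hd, h2, h0.symm]
    abel
  have h := Lz.proj_eq 0 (zero_mem _) (Lz.p10 (Lz.d (Lz.p0 x))) (Lz.p10_mem _)
    (Lz.p01 (Lz.d (Lz.p0 x))) (Lz.p01_mem _)
    (Lz.d (Lz.p10 x) + Lz.d (Lz.p01 x))
    (add_mem (Lz.d10_mem _ (Lz.p10_mem x)) (Lz.d01_mem _ (Lz.p01_mem x)))
  rw [hsum] at h
  exact h

lemma del_of_mem0 {x : A} (h : x ∈ Lz.A0) : Lz.del x = Lz.p10 (Lz.d x) := by
  obtain ⟨h1, h2, h3, h4⟩ := Lz.proj_of_mem0 h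
  unfold del
  rw [h1, h3, map_zero, add_zero]

lemma delbar_of_mem0 {x : A} (h : x ∈ Lz.A0) : Lz.delbar x = Lz.p01 (Lz.d x) := by
  obtain ⟨h1, h2, h3, h4⟩ := Lz.proj_of_mem0 h
  unfold delbar
  rw [h1, h2, map_zero, add_zero]

lemma delbar_of_mem10 {x : A} (h : x ∈ Lz.A10) : Lz.delbar x = Lz.d x := by
  obtain ⟨h1, h2, h3, h4⟩ := Lz.proj_of_mem10 h
  unfold delbar
  rw [h1, h2, map_zero, map_zero, zero_add]

lemma del_of_mem01 {x : A} (h : x ∈ Lz.A01) : Lz.del x = Lz.d x := by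
  obtain ⟨h1, h2, h3, h4⟩ := Lz.proj_of_mem01 h
  unfold del
  rw [h1, h3, map_zero, map_zero, zero_add]

lemma proj_del (x : A) :
    Lz.p0 (Lz.del x) = 0 ∧ Lz.p10 (Lz.del x) = Lz.p10 (Lz.d (Lz.p0 x)) ∧
    Lz.p01 (Lz.del x) = 0 ∧ Lz.p2 (Lz.del x) = Lz.d (Lz.p01 x) := by
  have hsum : (0 : A) + Lz.p10 (Lz.d (Lz.p0 x)) + 0 + Lz.d (Lz.p01 x) = Lz.del x := by
    unfold del; abel
  have h := Lz.proj_eq 0 (zero_mem _) (Lz.p10 (Lz.d (Lz.p0 x))) (Lz.p10_mem _)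
    0 (zero_mem _) (Lz.d (Lz.p01 x)) (Lz.d01_mem _ (Lz.p01_mem x))
  rw [hsum] at h
  exact h

lemma proj_delbar (x : A) :
    Lz.p0 (Lz.delbar x) = 0 ∧ Lz.p10 (Lz.delbar x) = 0 ∧
    Lz.p01 (Lz.delbar x) = Lz.p01 (Lz.d (Lz.p0 x)) ∧
    Lz.p2 (Lz.delbar x) = Lz.d (Lz.p10 x) := by
  have hsum : (0 : A) + 0 + Lz.p01 (Lz.d (Lz.p0 x)) + Lz.d (Lz.p10 x) = Lz.delbar x := by
    unfold delbar; abel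
  have h := Lz.proj_eq 0 (zero_mem _) 0 (zero_mem _)
    (Lz.p01 (Lz.d (Lz.p0 x))) (Lz.p01_mem _)
    (Lz.d (Lz.p10 x)) (Lz.d10_mem _ (Lz.p10_mem x))
  rw [hsum] at h
  exact h

lemma tau_omega_swap {x y : A} (hx : x ∈ Lz.A0) (hy : y ∈ Lz.A0) :
    Lz.tau (Lz.omega * (x * y)) = Lz.tau (Lz.omega * (y * x)) := by
  have h1 : Lz.omega * (x * y) = x * (Lz.omega * y) := by
    rw [← mul_assoc, Lz.omega_comm x hx, mul_assoc]
  rw [h1]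
  conv_rhs => rw [← mul_assoc]
  exact Lz.tau_comm0 x hx _

lemma tau_mul01_zero {x y : A} (hx : x ∈ Lz.A01) (hy : y ∈ Lz.A01) :
    Lz.tau (x * y) = 0 := by
  have hst := Lz.st_mul1 x y (Or.inr hx) (Or.inr hy)
  have h0 : Lz.st y * Lz.st x = 0 := Lz.mul10_10 _ (Lz.st_mem01 y hy) _ (Lz.st_mem01 x hx)
  have h := Lz.tau_star _ (Lz.mul01_01 x hx y hy)
  rw [hst, h0, neg_zero, map_zero] at h
  have h2 := congrArg (starRingEnd ℂ) h.symm
  simpa using h2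

end LozengeAlgebra

namespace LozengeAlgebra

variable {A : Type*} [Ring A] [Algebra ℂ A] (Lz : LozengeAlgebra A)

lemma innerL_add_right (u x y : A) :
    Lz.innerL u (x + y) = Lz.innerL u x + Lz.innerL u y := by
  simp only [innerL, map_add, mul_add]
  ring

lemma innerL_smul_right (c : ℂ) (u x : A) :
    Lz.innerL u (c • x) = c * Lz.innerL u x := by
  simp only [innerL, map_smul, mul_smul_comm, smul_eq_mul]
  ring

lemma innerL_zero_right (u : A) : Lz.innerL u 0 = 0 := by
  simp [innerL]

lemma innerL_sub_right (u x y : A) :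
    Lz.innerL u (x - y) = Lz.innerL u x - Lz.innerL u y := by
  simp only [innerL, map_sub, mul_sub]
  ring

lemma innerL_right0 (u : A) {v : A} (hv : v ∈ Lz.A0) :
    Lz.innerL u v = Lz.tau (Lz.omega * (Lz.st (Lz.p0 u) * v)) := by
  obtain ⟨h1, h2, h3, h4⟩ := Lz.proj_of_mem0 hv
  simp [innerL, h1, h2, h3, h4]

lemma innerL_right10 (u : A) {v : A} (hv : v ∈ Lz.A10) :
    Lz.innerL u v = -(Complex.I * Lz.tau (Lz.st (Lz.p10 u) * v)) := by
  obtain ⟨h1, h2, h3, h4⟩ := Lz.proj_of_mem10 hv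
  simp [innerL, h1, h2, h3, h4]

lemma innerL_right01 (u : A) {v : A} (hv : v ∈ Lz.A01) :
    Lz.innerL u v = Complex.I * Lz.tau (Lz.st (Lz.p01 u) * v) := by
  obtain ⟨h1, h2, h3, h4⟩ := Lz.proj_of_mem01 hv
  simp [innerL, h1, h2, h3, h4]

lemma innerL_right2 (u : A) {v : A} (hv : v ∈ Lz.A2) :
    Lz.innerL u v = Lz.tau (Lz.omega * (Lz.st (Lz.Lam (Lz.p2 u)) * Lz.Lam v)) := by
  obtain ⟨h1, h2, h3, h4⟩ := Lz.proj_of_mem2 hv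
  simp [innerL, h1, h2, h3, h4]

lemma conj0 {x y : A} (hx : x ∈ Lz.A0) (hy : y ∈ Lz.A0) :
    Lz.tau (Lz.omega * (Lz.st x * y))
      = (starRingEnd ℂ) (Lz.tau (Lz.omega * (Lz.st y * x))) := by
  have hz : Lz.st y * x ∈ Lz.A0 := Lz.mul00 _ (Lz.st_mem0 y hy) x hx
  have hmem : Lz.omega * (Lz.st y * x) ∈ Lz.A2 := (Lz.mul0_2 _ hz _ Lz.omega_mem).2
  have hstar := Lz.tau_star _ hmem
  have h1 : Lz.st (Lz.omega * (Lz.st y * x)) = Lz.omega * (Lz.st x * y) := by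
    have e1 := (Lz.st_mul0 _ hz Lz.omega).2
    have e2 := (Lz.st_mul0 _ (Lz.st_mem0 y hy) x).1
    rw [e1, Lz.omega_st, e2, Lz.st_invol]
    exact (Lz.omega_comm _ (Lz.mul00 _ (Lz.st_mem0 x hx) y hy)).symm
  rw [h1] at hstar
  exact hstar

lemma conj10 {x y : A} (hx : x ∈ Lz.A10) (hy : y ∈ Lz.A10) :
    -Complex.I * Lz.tau (Lz.st x * y)
      = (starRingEnd ℂ) (-Complex.I * Lz.tau (Lz.st y * x)) := by
  have hmem : Lz.st y * x ∈ Lz.A2 := (Lz.mul10_01 x hx _ (Lz.st_mem10 y hy)).2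
  have hstar := Lz.tau_star _ hmem
  have h1 : Lz.st (Lz.st y * x) = -(Lz.st x * y) := by
    rw [Lz.st_mul1 _ x (Or.inr (Lz.st_mem10 y hy)) (Or.inl hx), Lz.st_invol]
  have h2 : (starRingEnd ℂ) (Lz.tau (Lz.st y * x)) = -(Lz.tau (Lz.st x * y)) := by
    rw [← hstar, h1, map_neg]
  have h3 : (starRingEnd ℂ) (-Complex.I * Lz.tau (Lz.st y * x))
      = (starRingEnd ℂ) (-Complex.I) * (starRingEnd ℂ) (Lz.tau (Lz.st y * x)) :=
    map_mul _ _ _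
  rw [h3, h2, map_neg, Complex.conj_I]
  ring

lemma conj01 {x y : A} (hx : x ∈ Lz.A01) (hy : y ∈ Lz.A01) :
    Complex.I * Lz.tau (Lz.st x * y)
      = (starRingEnd ℂ) (Complex.I * Lz.tau (Lz.st y * x)) := by
  have hmem : Lz.st y * x ∈ Lz.A2 := (Lz.mul10_01 _ (Lz.st_mem01 y hy) x hx).1
  have hstar := Lz.tau_star _ hmem
  have h1 : Lz.st (Lz.st y * x) = -(Lz.st x * y) := by
    rw [Lz.st_mul1 _ x (Or.inl (Lz.st_mem01 y hy)) (Or.inr hx), Lz.st_invol]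
  have h2 : (starRingEnd ℂ) (Lz.tau (Lz.st y * x)) = -(Lz.tau (Lz.st x * y)) := by
    rw [← hstar, h1, map_neg]
  have h3 : (starRingEnd ℂ) (Complex.I * Lz.tau (Lz.st y * x))
      = (starRingEnd ℂ) Complex.I * (starRingEnd ℂ) (Lz.tau (Lz.st y * x)) :=
    map_mul _ _ _
  rw [h3, h2, Complex.conj_I]
  ring

lemma innerL_conj (u v : A) :
    Lz.innerL u v = (starRingEnd ℂ) (Lz.innerL v u) := by
  simp only [innerL, map_add]
  rw [Lz.conj0 (Lz.p0_mem u) (Lz.p0_mem v),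
      Lz.conj10 (Lz.p10_mem u) (Lz.p10_mem v),
      Lz.conj01 (Lz.p01_mem u) (Lz.p01_mem v),
      Lz.conj0 (Lz.Lam_mem (Lz.p2 u)) (Lz.Lam_mem (Lz.p2 v))]

lemma pos_piece0 {x : A} (hx : x ∈ Lz.A0) :
    0 ≤ (Lz.tau (Lz.omega * (Lz.st x * x))).re ∧
    (Lz.tau (Lz.omega * (Lz.st x * x))).im = 0 ∧
    (Lz.tau (Lz.omega * (Lz.st x * x)) = 0 → x = 0) := by
  by_cases h : x = 0
  · subst h; simp
  · obtain ⟨h1, h2⟩ := Lz.pos0 x hx h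
    exact ⟨le_of_lt h1, h2, fun hc => absurd h1 (by rw [hc]; simp)⟩

lemma pos_piece10 {x : A} (hx : x ∈ Lz.A10) :
    0 ≤ (-Complex.I * Lz.tau (Lz.st x * x)).re ∧
    (-Complex.I * Lz.tau (Lz.st x * x)).im = 0 ∧
    (-Complex.I * Lz.tau (Lz.st x * x) = 0 → x = 0) := by
  by_cases h : x = 0
  · subst h; simp
  · obtain ⟨h1, h2⟩ := Lz.pos10 x hx h
    exact ⟨le_of_lt h1, h2, fun hc => absurd h1 (by rw [hc]; simp)⟩

lemma pos_piece01 {x : A} (hx : x ∈ Lz.A01) :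
    0 ≤ (Complex.I * Lz.tau (Lz.st x * x)).re ∧
    (Complex.I * Lz.tau (Lz.st x * x)).im = 0 ∧
    (Complex.I * Lz.tau (Lz.st x * x) = 0 → x = 0) := by
  by_cases h : x = 0
  · subst h; simp
  · obtain ⟨h1, h2⟩ := Lz.pos01 x hx h
    exact ⟨le_of_lt h1, h2, fun hc => absurd h1 (by rw [hc]; simp)⟩

lemma pos_piece2 {x : A} (hx : x ∈ Lz.A2) :
    0 ≤ (Lz.tau (Lz.omega * (Lz.st (Lz.Lam x) * Lz.Lam x))).re ∧
    (Lz.tau (Lz.omega * (Lz.st (Lz.Lam x) * Lz.Lam x))).im = 0 ∧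
    (Lz.tau (Lz.omega * (Lz.st (Lz.Lam x) * Lz.Lam x)) = 0 → x = 0) := by
  by_cases h : x = 0
  · subst h; simp
  · obtain ⟨h1, h2⟩ := Lz.pos2 x hx h
    exact ⟨le_of_lt h1, h2, fun hc => absurd h1 (by rw [hc]; simp)⟩

lemma innerL_self (x : A) :
    0 ≤ (Lz.innerL x x).re ∧ (Lz.innerL x x).im = 0 ∧
    (Lz.innerL x x = 0 → x = 0) := by
  obtain ⟨a0, b0, z0⟩ := Lz.pos_piece0 (Lz.p0_mem x)
  obtain ⟨a1, b1, z1⟩ := Lz.pos_piece10 (Lz.p10_mem x)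
  obtain ⟨a2, b2, z2⟩ := Lz.pos_piece01 (Lz.p01_mem x)
  obtain ⟨a3, b3, z3⟩ := Lz.pos_piece2 (Lz.p2_mem x)
  have hre : (Lz.innerL x x).re
      = (Lz.tau (Lz.omega * (Lz.st (Lz.p0 x) * Lz.p0 x))).re
        + (-Complex.I * Lz.tau (Lz.st (Lz.p10 x) * Lz.p10 x)).re
        + (Complex.I * Lz.tau (Lz.st (Lz.p01 x) * Lz.p01 x)).re
        + (Lz.tau (Lz.omega * (Lz.st (Lz.Lam (Lz.p2 x)) * Lz.Lam (Lz.p2 x)))).re := by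
    simp [innerL]
  have him : (Lz.innerL x x).im
      = (Lz.tau (Lz.omega * (Lz.st (Lz.p0 x) * Lz.p0 x))).im
        + (-Complex.I * Lz.tau (Lz.st (Lz.p10 x) * Lz.p10 x)).im
        + (Complex.I * Lz.tau (Lz.st (Lz.p01 x) * Lz.p01 x)).im
        + (Lz.tau (Lz.omega * (Lz.st (Lz.Lam (Lz.p2 x)) * Lz.Lam (Lz.p2 x)))).im := by
    simp [innerL]
  refine ⟨?_, ?_, ?_⟩
  · rw [hre]; linarith
  · rw [him, b0, b1, b2, b3]; ring
  · intro h
    have hre0 : (Lz.tau (Lz.omega * (Lz.st (Lz.p0 x) * Lz.p0 x))).re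
        + (-Complex.I * Lz.tau (Lz.st (Lz.p10 x) * Lz.p10 x)).re
        + (Complex.I * Lz.tau (Lz.st (Lz.p01 x) * Lz.p01 x)).re
        + (Lz.tau (Lz.omega * (Lz.st (Lz.Lam (Lz.p2 x)) * Lz.Lam (Lz.p2 x)))).re = 0 := by
      rw [← hre, h]; simp
    have e0 : Lz.p0 x = 0 :=
      z0 (Complex.ext (by rw [Complex.zero_re]; linarith) (by rw [Complex.zero_im]; exact b0))
    have e1 : Lz.p10 x = 0 :=
      z1 (Complex.ext (by rw [Complex.zero_re]; linarith) (by rw [Complex.zero_im]; exact b1))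
    have e2 : Lz.p01 x = 0 :=
      z2 (Complex.ext (by rw [Complex.zero_re]; linarith) (by rw [Complex.zero_im]; exact b2))
    have e3 : Lz.p2 x = 0 :=
      z3 (Complex.ext (by rw [Complex.zero_re]; linarith) (by rw [Complex.zero_im]; exact b3))
    rw [← Lz.decomp x, e0, e1, e2, e3]
    simp

lemma innerL_eq_zero {x : A} (h : ∀ u, Lz.innerL u x = 0) : x = 0 :=
  (Lz.innerL_self x).2.2 (h x)

lemma innerL_ext {x y : A} (h : ∀ u, Lz.innerL u x = Lz.innerL u y) : x = y := by
  have hsub : Lz.innerL (x - y) (x - y) = 0 := by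
    rw [Lz.innerL_sub_right, h (x - y), sub_self]
  exact sub_eq_zero.mp ((Lz.innerL_self (x - y)).2.2 hsub)

lemma hodge (dS : A → A)
    (hdS : ∀ u v : A, Lz.innerL (Lz.d u) v = Lz.innerL u (dS v)) (a : A) :
    Lz.d (dS a) + dS (Lz.d a) = 0 ↔ (Lz.d a = 0 ∧ dS a = 0) := by
  have hdS0 : dS 0 = 0 := by
    apply Lz.innerL_eq_zero
    intro u
    rw [← hdS]
    exact Lz.innerL_zero_right _
  constructor
  · intro h
    have h1 : Lz.innerL a (Lz.d (dS a)) + Lz.innerL a (dS (Lz.d a)) = 0 := by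
      rw [← Lz.innerL_add_right, h, Lz.innerL_zero_right]
    have h2 : Lz.innerL a (dS (Lz.d a)) = Lz.innerL (Lz.d a) (Lz.d a) :=
      (hdS a (Lz.d a)).symm
    have h3 : Lz.innerL a (Lz.d (dS a)) = Lz.innerL (dS a) (dS a) := by
      rw [Lz.innerL_conj a (Lz.d (dS a)), hdS (dS a) a]
      exact Complex.conj_eq_iff_im.mpr (Lz.innerL_self (dS a)).2.1
    rw [h2, h3] at h1
    obtain ⟨r1, s1, t1⟩ := Lz.innerL_self (dS a)
    obtain ⟨r2, s2, t2⟩ := Lz.innerL_self (Lz.d a)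
    have hre : (Lz.innerL (dS a) (dS a)).re + (Lz.innerL (Lz.d a) (Lz.d a)).re = 0 := by
      have := congrArg Complex.re h1
      simpa using this
    have e1 : Lz.innerL (dS a) (dS a) = 0 :=
      Complex.ext (by rw [Complex.zero_re]; linarith) (by rw [Complex.zero_im]; exact s1)
    have e2 : Lz.innerL (Lz.d a) (Lz.d a) = 0 :=
      Complex.ext (by rw [Complex.zero_re]; linarith) (by rw [Complex.zero_im]; exact s2)
    exact ⟨t2 e2, t1 e1⟩
  · rintro ⟨h1, h2⟩
    rw [h2, h1, hdS0, map_zero, add_zero]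

end LozengeAlgebra

namespace LozengeAlgebra

variable {A : Type*} [Ring A] [Algebra ℂ A] (Lz : LozengeAlgebra A)

lemma dS_zero_of_mem0 (dS : A → A)
    (hdS : ∀ u v : A, Lz.innerL (Lz.d u) v = Lz.innerL u (dS v))
    {a : A} (ha : a ∈ Lz.A0) : dS a = 0 := by
  apply Lz.innerL_eq_zero
  intro u
  rw [← hdS u a, Lz.innerL_right0 (Lz.d u) ha, (Lz.proj_d u).1, Lz.st_zero,
    zero_mul, mul_zero, map_zero]

lemma key0 {a : A} (ha : a ∈ Lz.A0) :
    Lz.tau (Lz.st (Lz.p10 (Lz.d a)) * Lz.p10 (Lz.d a))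
      = -Lz.tau (Lz.st (Lz.p01 (Lz.d a)) * Lz.p01 (Lz.d a)) := by
  have hb : Lz.st a ∈ Lz.A0 := Lz.st_mem0 a ha
  have hda : Lz.d a = Lz.p10 (Lz.d a) + Lz.p01 (Lz.d a) := (Lz.d0_mem a ha).symm
  have hdb : Lz.d (Lz.st a) = Lz.st (Lz.p10 (Lz.d a)) + Lz.st (Lz.p01 (Lz.d a)) := by
    rw [← Lz.st_d]
    conv_lhs => rw [hda]
    rw [Lz.st_add]
  have hlz := Lz.leibniz0 _ hb (Lz.d a)
  have htau := Lz.tau_d (Lz.st a * Lz.d a)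
  rw [hlz, Lz.d_sq a, mul_zero, add_zero] at htau
  have hcomb : Lz.d (Lz.st a) * Lz.d a
      = (Lz.st (Lz.p10 (Lz.d a)) + Lz.st (Lz.p01 (Lz.d a)))
        * (Lz.p10 (Lz.d a) + Lz.p01 (Lz.d a)) := by
    rw [← hda, ← hdb]
  rw [hcomb, add_mul, mul_add, mul_add, map_add, map_add, map_add] at htau
  have hz1 : Lz.st (Lz.p01 (Lz.d a)) * Lz.p10 (Lz.d a) = 0 :=
    Lz.mul10_10 _ (Lz.st_mem01 _ (Lz.p01_mem _)) _ (Lz.p10_mem _)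
  have hz2 : Lz.tau (Lz.st (Lz.p10 (Lz.d a)) * Lz.p01 (Lz.d a)) = 0 :=
    Lz.tau_mul01_zero (Lz.st_mem10 _ (Lz.p10_mem _)) (Lz.p01_mem _)
  rw [hz1, map_zero, hz2] at htau
  linear_combination htau

lemma p10_d_eq_zero_iff {a : A} (ha : a ∈ Lz.A0) :
    Lz.p10 (Lz.d a) = 0 ↔ Lz.p01 (Lz.d a) = 0 := by
  have hk := Lz.key0 ha
  constructor
  · intro h
    by_contra hne
    have hp := Lz.pos01 _ (Lz.p01_mem (Lz.d a)) hne
    rw [h] at hk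
    have h0 : Lz.tau (Lz.st (Lz.p01 (Lz.d a)) * Lz.p01 (Lz.d a)) = 0 := by
      have hzz : Lz.tau (Lz.st (0 : A) * 0) = 0 := by rw [mul_zero, map_zero]
      rw [hzz] at hk
      linear_combination hk
    rw [h0, mul_zero] at hp
    simpa using hp.1
  · intro h
    by_contra hne
    have hp := Lz.pos10 _ (Lz.p10_mem (Lz.d a)) hne
    rw [h] at hk
    have h0 : Lz.tau (Lz.st (Lz.p10 (Lz.d a)) * Lz.p10 (Lz.d a)) = 0 := by
      have hzz : Lz.tau (Lz.st (0 : A) * 0) = 0 := by rw [mul_zero, map_zero]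
      rw [hzz] at hk
      linear_combination hk
    rw [h0, mul_zero] at hp
    simpa using hp.1

lemma d_eq_zero_iff_p10 {a : A} (ha : a ∈ Lz.A0) :
    Lz.d a = 0 ↔ Lz.p10 (Lz.d a) = 0 := by
  constructor
  · intro h; rw [h, map_zero]
  · intro h
    have h2 := (Lz.p10_d_eq_zero_iff ha).mp h
    rw [← Lz.d0_mem a ha, h, h2, add_zero]

lemma d_eq_zero_iff_p01 {a : A} (ha : a ∈ Lz.A0) :
    Lz.d a = 0 ↔ Lz.p01 (Lz.d a) = 0 := by
  rw [Lz.d_eq_zero_iff_p10 ha, Lz.p10_d_eq_zero_iff ha]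

lemma adj10 {a : A} (ha : a ∈ Lz.A10) (u : A) :
    -(Complex.I * Lz.tau (Lz.st (Lz.p10 (Lz.d (Lz.p0 u))) * a))
      = Lz.innerL u (Complex.I • Lz.Lam (Lz.d a)) := by
  have hwmem : Lz.st (Lz.p0 u) ∈ Lz.A0 := Lz.st_mem0 _ (Lz.p0_mem u)
  have hemem : Lz.Lam (Lz.d a) ∈ Lz.A0 := Lz.Lam_mem _
  have h1 : Lz.st (Lz.p10 (Lz.d (Lz.p0 u))) = Lz.p01 (Lz.d (Lz.st (Lz.p0 u))) := by
    rw [← (Lz.proj_st (Lz.d (Lz.p0 u))).2.2.1, Lz.st_d]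
  have h2 : Lz.p01 (Lz.d (Lz.st (Lz.p0 u))) * a = Lz.d (Lz.st (Lz.p0 u)) * a := by
    have hd0 := Lz.d0_mem _ hwmem
    have hz : Lz.p10 (Lz.d (Lz.st (Lz.p0 u))) * a = 0 :=
      Lz.mul10_10 _ (Lz.p10_mem _) a ha
    calc Lz.p01 (Lz.d (Lz.st (Lz.p0 u))) * a
        = (Lz.p10 (Lz.d (Lz.st (Lz.p0 u))) + Lz.p01 (Lz.d (Lz.st (Lz.p0 u)))) * a
          - Lz.p10 (Lz.d (Lz.st (Lz.p0 u))) * a := by rw [add_mul]; abel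
      _ = Lz.d (Lz.st (Lz.p0 u)) * a := by rw [hd0, hz, sub_zero]
  have h3 : Lz.tau (Lz.d (Lz.st (Lz.p0 u)) * a)
      = -Lz.tau (Lz.st (Lz.p0 u) * Lz.d a) := by
    have hl := Lz.leibniz0 _ hwmem a
    have ht := Lz.tau_d (Lz.st (Lz.p0 u) * a)
    rw [hl, map_add] at ht
    linear_combination ht
  have h4 : Lz.d a = Lz.omega * Lz.Lam (Lz.d a) :=
    (Lz.Lam_right_inv _ (Lz.d10_mem a ha)).symm
  have h5 : Lz.tau (Lz.st (Lz.p0 u) * Lz.d a)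
      = Lz.tau (Lz.omega * (Lz.Lam (Lz.d a) * Lz.st (Lz.p0 u))) := by
    conv_lhs => rw [h4]
    rw [Lz.tau_comm0 _ hwmem, mul_assoc]
  have h6 : Lz.innerL u (Complex.I • Lz.Lam (Lz.d a))
      = Complex.I * Lz.tau (Lz.omega * (Lz.st (Lz.p0 u) * Lz.Lam (Lz.d a))) := by
    rw [Lz.innerL_smul_right, Lz.innerL_right0 u hemem]
  rw [h1, h2, h3, h5, h6, Lz.tau_omega_swap hemem hwmem]
  ring

lemma adj01 {a : A} (ha : a ∈ Lz.A01) (u : A) :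
    Complex.I * Lz.tau (Lz.st (Lz.p01 (Lz.d (Lz.p0 u))) * a)
      = Lz.innerL u ((-Complex.I) • Lz.Lam (Lz.d a)) := by
  have hwmem : Lz.st (Lz.p0 u) ∈ Lz.A0 := Lz.st_mem0 _ (Lz.p0_mem u)
  have hemem : Lz.Lam (Lz.d a) ∈ Lz.A0 := Lz.Lam_mem _
  have h1 : Lz.st (Lz.p01 (Lz.d (Lz.p0 u))) = Lz.p10 (Lz.d (Lz.st (Lz.p0 u))) := by
    rw [← (Lz.proj_st (Lz.d (Lz.p0 u))).2.1, Lz.st_d]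
  have hsplit : Lz.tau (Lz.d (Lz.st (Lz.p0 u)) * a)
      = Lz.tau (Lz.p10 (Lz.d (Lz.st (Lz.p0 u))) * a)
        + Lz.tau (Lz.p01 (Lz.d (Lz.st (Lz.p0 u))) * a) := by
    rw [← map_add, ← add_mul, Lz.d0_mem _ hwmem]
  have hz : Lz.tau (Lz.p01 (Lz.d (Lz.st (Lz.p0 u))) * a) = 0 :=
    Lz.tau_mul01_zero (Lz.p01_mem _) ha
  have h3 : Lz.tau (Lz.d (Lz.st (Lz.p0 u)) * a)
      = -Lz.tau (Lz.st (Lz.p0 u) * Lz.d a) := by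
    have hl := Lz.leibniz0 _ hwmem a
    have ht := Lz.tau_d (Lz.st (Lz.p0 u) * a)
    rw [hl, map_add] at ht
    linear_combination ht
  have h4 : Lz.d a = Lz.omega * Lz.Lam (Lz.d a) :=
    (Lz.Lam_right_inv _ (Lz.d01_mem a ha)).symm
  have h5 : Lz.tau (Lz.st (Lz.p0 u) * Lz.d a)
      = Lz.tau (Lz.omega * (Lz.Lam (Lz.d a) * Lz.st (Lz.p0 u))) := by
    conv_lhs => rw [h4]
    rw [Lz.tau_comm0 _ hwmem, mul_assoc]
  have h6 : Lz.innerL u ((-Complex.I) • Lz.Lam (Lz.d a))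
      = -Complex.I * Lz.tau (Lz.omega * (Lz.st (Lz.p0 u) * Lz.Lam (Lz.d a))) := by
    rw [Lz.innerL_smul_right, Lz.innerL_right0 u hemem]
  have h7 : Lz.tau (Lz.p10 (Lz.d (Lz.st (Lz.p0 u))) * a)
      = -Lz.tau (Lz.omega * (Lz.Lam (Lz.d a) * Lz.st (Lz.p0 u))) := by
    linear_combination -hsplit + h3 - hz - h5
  rw [h1, h7, h6, Lz.tau_omega_swap hemem hwmem]
  ring

lemma dS_of_mem10 (dS : A → A)
    (hdS : ∀ u v : A, Lz.innerL (Lz.d u) v = Lz.innerL u (dS v))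
    {a : A} (ha : a ∈ Lz.A10) : dS a = Complex.I • Lz.Lam (Lz.d a) := by
  apply Lz.innerL_ext
  intro u
  rw [← hdS u a, Lz.innerL_right10 (Lz.d u) ha, (Lz.proj_d u).2.1, Lz.adj10 ha u]

lemma delS_of_mem10 (delS : A → A)
    (hdelS : ∀ u v : A, Lz.innerL (Lz.del u) v = Lz.innerL u (delS v))
    {a : A} (ha : a ∈ Lz.A10) : delS a = Complex.I • Lz.Lam (Lz.d a) := by
  apply Lz.innerL_ext
  intro u
  rw [← hdelS u a, Lz.innerL_right10 (Lz.del u) ha, (Lz.proj_del u).2.1, Lz.adj10 ha u]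

lemma dS_of_mem01 (dS : A → A)
    (hdS : ∀ u v : A, Lz.innerL (Lz.d u) v = Lz.innerL u (dS v))
    {a : A} (ha : a ∈ Lz.A01) : dS a = (-Complex.I) • Lz.Lam (Lz.d a) := by
  apply Lz.innerL_ext
  intro u
  rw [← hdS u a, Lz.innerL_right01 (Lz.d u) ha, (Lz.proj_d u).2.2.1, Lz.adj01 ha u]

lemma delbarS_of_mem01 (delbarS : A → A)
    (hdelbarS : ∀ u v : A, Lz.innerL (Lz.delbar u) v = Lz.innerL u (delbarS v))
    {a : A} (ha : a ∈ Lz.A01) : delbarS a = (-Complex.I) • Lz.Lam (Lz.d a) := by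
  apply Lz.innerL_ext
  intro u
  rw [← hdelbarS u a, Lz.innerL_right01 (Lz.delbar u) ha, (Lz.proj_delbar u).2.2.1,
    Lz.adj01 ha u]

end LozengeAlgebra

namespace LozengeAlgebra

variable {A : Type*} [Ring A] [Algebra ℂ A] (Lz : LozengeAlgebra A)

lemma tau_omega_lam {z y : A} (hz : z ∈ Lz.A0) (hy : y ∈ Lz.A2) :
    Lz.tau (Lz.omega * (z * Lz.Lam y)) = Lz.tau (z * y) := by
  rw [← mul_assoc, Lz.omega_comm z hz, mul_assoc, Lz.Lam_right_inv y hy]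

lemma key2del {a : A} (ha : a ∈ Lz.A2) {x : A} (hx : x ∈ Lz.A01) :
    Lz.innerL (Lz.d x) a = Lz.tau (Lz.st x * Lz.p01 (Lz.d (Lz.Lam a))) := by
  have hc : Lz.Lam a ∈ Lz.A0 := Lz.Lam_mem _
  have hsc : Lz.st (Lz.Lam a) ∈ Lz.A0 := Lz.st_mem0 _ hc
  have h1 : Lz.innerL a (Lz.d x) = Lz.tau (Lz.st (Lz.Lam a) * Lz.d x) := by
    rw [Lz.innerL_right2 a (Lz.d01_mem x hx), (Lz.proj_of_mem2 ha).2.2.2]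
    exact Lz.tau_omega_lam hsc (Lz.d01_mem x hx)
  have ht := Lz.tau_d (Lz.st (Lz.Lam a) * x)
  rw [Lz.leibniz0 _ hsc x, map_add] at ht
  have hsplit : Lz.tau (Lz.d (Lz.st (Lz.Lam a)) * x)
      = Lz.tau (Lz.p10 (Lz.d (Lz.st (Lz.Lam a))) * x)
        + Lz.tau (Lz.p01 (Lz.d (Lz.st (Lz.Lam a))) * x) := by
    rw [← map_add, ← add_mul, Lz.d0_mem _ hsc]
  have hz : Lz.tau (Lz.p01 (Lz.d (Lz.st (Lz.Lam a))) * x) = 0 :=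
    Lz.tau_mul01_zero (Lz.p01_mem _) hx
  have h2 : Lz.tau (Lz.st (Lz.Lam a) * Lz.d x)
      = -Lz.tau (Lz.p10 (Lz.d (Lz.st (Lz.Lam a))) * x) := by
    linear_combination ht - hsplit - hz
  have hmem2 : Lz.p10 (Lz.d (Lz.st (Lz.Lam a))) * x ∈ Lz.A2 :=
    (Lz.mul10_01 _ (Lz.p10_mem _) x hx).1
  have h3 := Lz.tau_star _ hmem2
  have h4 : Lz.st (Lz.p10 (Lz.d (Lz.st (Lz.Lam a))) * x)
      = -(Lz.st x * Lz.p01 (Lz.d (Lz.Lam a))) := by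
    rw [Lz.st_mul1 _ x (Or.inl (Lz.p10_mem _)) (Or.inr hx)]
    have h5 : Lz.st (Lz.p10 (Lz.d (Lz.st (Lz.Lam a)))) = Lz.p01 (Lz.d (Lz.Lam a)) := by
      rw [← (Lz.proj_st (Lz.d (Lz.st (Lz.Lam a)))).2.2.1, Lz.st_d, Lz.st_invol]
    rw [h5]
  have h6 : (starRingEnd ℂ) (Lz.tau (Lz.p10 (Lz.d (Lz.st (Lz.Lam a))) * x))
      = -Lz.tau (Lz.st x * Lz.p01 (Lz.d (Lz.Lam a))) := by
    rw [← h3, h4, map_neg]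
  rw [Lz.innerL_conj (Lz.d x) a, h1, h2, map_neg, h6]
  ring

lemma key2delbar {a : A} (ha : a ∈ Lz.A2) {x : A} (hx : x ∈ Lz.A10) :
    Lz.innerL (Lz.d x) a = Lz.tau (Lz.st x * Lz.p10 (Lz.d (Lz.Lam a))) := by
  have hc : Lz.Lam a ∈ Lz.A0 := Lz.Lam_mem _
  have hsc : Lz.st (Lz.Lam a) ∈ Lz.A0 := Lz.st_mem0 _ hc
  have h1 : Lz.innerL a (Lz.d x) = Lz.tau (Lz.st (Lz.Lam a) * Lz.d x) := by
    rw [Lz.innerL_right2 a (Lz.d10_mem x hx), (Lz.proj_of_mem2 ha).2.2.2]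
    exact Lz.tau_omega_lam hsc (Lz.d10_mem x hx)
  have ht := Lz.tau_d (Lz.st (Lz.Lam a) * x)
  rw [Lz.leibniz0 _ hsc x, map_add] at ht
  have hsplit : Lz.tau (Lz.d (Lz.st (Lz.Lam a)) * x)
      = Lz.tau (Lz.p10 (Lz.d (Lz.st (Lz.Lam a))) * x)
        + Lz.tau (Lz.p01 (Lz.d (Lz.st (Lz.Lam a))) * x) := by
    rw [← map_add, ← add_mul, Lz.d0_mem _ hsc]
  have hz : Lz.tau (Lz.p10 (Lz.d (Lz.st (Lz.Lam a))) * x) = 0 := by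
    rw [Lz.mul10_10 _ (Lz.p10_mem _) x hx, map_zero]
  have h2 : Lz.tau (Lz.st (Lz.Lam a) * Lz.d x)
      = -Lz.tau (Lz.p01 (Lz.d (Lz.st (Lz.Lam a))) * x) := by
    linear_combination ht - hsplit - hz
  have hmem2 : Lz.p01 (Lz.d (Lz.st (Lz.Lam a))) * x ∈ Lz.A2 :=
    (Lz.mul10_01 x hx _ (Lz.p01_mem _)).2
  have h3 := Lz.tau_star _ hmem2
  have h4 : Lz.st (Lz.p01 (Lz.d (Lz.st (Lz.Lam a))) * x)
      = -(Lz.st x * Lz.p10 (Lz.d (Lz.Lam a))) := by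
    rw [Lz.st_mul1 _ x (Or.inr (Lz.p01_mem _)) (Or.inl hx)]
    have h5 : Lz.st (Lz.p01 (Lz.d (Lz.st (Lz.Lam a)))) = Lz.p10 (Lz.d (Lz.Lam a)) := by
      rw [← (Lz.proj_st (Lz.d (Lz.st (Lz.Lam a)))).2.1, Lz.st_d, Lz.st_invol]
    rw [h5]
  have h6 : (starRingEnd ℂ) (Lz.tau (Lz.p01 (Lz.d (Lz.st (Lz.Lam a))) * x))
      = -Lz.tau (Lz.st x * Lz.p10 (Lz.d (Lz.Lam a))) := by
    rw [← h3, h4, map_neg]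
  rw [Lz.innerL_conj (Lz.d x) a, h1, h2, map_neg, h6]
  ring

lemma innerL_d_split2 {a : A} (ha : a ∈ Lz.A2) (u : A) :
    Lz.innerL (Lz.d u) a
      = Lz.innerL (Lz.d (Lz.p10 u)) a + Lz.innerL (Lz.d (Lz.p01 u)) a := by
  rw [Lz.innerL_right2 (Lz.d u) ha, Lz.innerL_right2 (Lz.d (Lz.p10 u)) ha,
    Lz.innerL_right2 (Lz.d (Lz.p01 u)) ha, (Lz.proj_d u).2.2.2,
    (Lz.proj_of_mem2 (Lz.d10_mem _ (Lz.p10_mem u))).2.2.2,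
    (Lz.proj_of_mem2 (Lz.d01_mem _ (Lz.p01_mem u))).2.2.2,
    map_add, Lz.st_add, add_mul, mul_add, map_add]

lemma dS_of_mem2 (dS : A → A)
    (hdS : ∀ u v : A, Lz.innerL (Lz.d u) v = Lz.innerL u (dS v))
    {a : A} (ha : a ∈ Lz.A2) :
    dS a = Complex.I • Lz.p10 (Lz.d (Lz.Lam a))
      + (-Complex.I) • Lz.p01 (Lz.d (Lz.Lam a)) := by
  apply Lz.innerL_ext
  intro u
  rw [← hdS u a, Lz.innerL_d_split2 ha u,
    Lz.key2delbar ha (Lz.p10_mem u), Lz.key2del ha (Lz.p01_mem u),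
    Lz.innerL_add_right, Lz.innerL_smul_right, Lz.innerL_smul_right,
    Lz.innerL_right10 u (Lz.p10_mem (Lz.d (Lz.Lam a))),
    Lz.innerL_right01 u (Lz.p01_mem (Lz.d (Lz.Lam a)))]
  linear_combination (Lz.tau (Lz.st (Lz.p10 u) * Lz.p10 (Lz.d (Lz.Lam a)))
    + Lz.tau (Lz.st (Lz.p01 u) * Lz.p01 (Lz.d (Lz.Lam a)))) * Complex.I_sq

lemma delS_of_mem2 (delS : A → A)
    (hdelS : ∀ u v : A, Lz.innerL (Lz.del u) v = Lz.innerL u (delS v))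
    {a : A} (ha : a ∈ Lz.A2) :
    delS a = (-Complex.I) • Lz.p01 (Lz.d (Lz.Lam a)) := by
  apply Lz.innerL_ext
  intro u
  have h1 : Lz.innerL (Lz.del u) a = Lz.innerL (Lz.d (Lz.p01 u)) a := by
    rw [Lz.innerL_right2 (Lz.del u) ha, Lz.innerL_right2 (Lz.d (Lz.p01 u)) ha,
      (Lz.proj_del u).2.2.2, (Lz.proj_of_mem2 (Lz.d01_mem _ (Lz.p01_mem u))).2.2.2]
  rw [← hdelS u a, h1, Lz.key2del ha (Lz.p01_mem u), Lz.innerL_smul_right,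
    Lz.innerL_right01 u (Lz.p01_mem (Lz.d (Lz.Lam a)))]
  linear_combination Lz.tau (Lz.st (Lz.p01 u) * Lz.p01 (Lz.d (Lz.Lam a))) * Complex.I_sq

lemma delbarS_of_mem2 (delbarS : A → A)
    (hdelbarS : ∀ u v : A, Lz.innerL (Lz.delbar u) v = Lz.innerL u (delbarS v))
    {a : A} (ha : a ∈ Lz.A2) :
    delbarS a = Complex.I • Lz.p10 (Lz.d (Lz.Lam a)) := by
  apply Lz.innerL_ext
  intro u
  have h1 : Lz.innerL (Lz.delbar u) a = Lz.innerL (Lz.d (Lz.p10 u)) a := by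
    rw [Lz.innerL_right2 (Lz.delbar u) ha, Lz.innerL_right2 (Lz.d (Lz.p10 u)) ha,
      (Lz.proj_delbar u).2.2.2, (Lz.proj_of_mem2 (Lz.d10_mem _ (Lz.p10_mem u))).2.2.2]
  rw [← hdelbarS u a, h1, Lz.key2delbar ha (Lz.p10_mem u), Lz.innerL_smul_right,
    Lz.innerL_right10 u (Lz.p10_mem (Lz.d (Lz.Lam a)))]
  linear_combination Lz.tau (Lz.st (Lz.p10 u) * Lz.p10 (Lz.d (Lz.Lam a))) * Complex.I_sq

end LozengeAlgebra

lemma smul_cancel_aux {A : Type*} [Ring A] [Algebra ℂ A] {c : ℂ} (hc : c ≠ 0) {z : A}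
    (h : c • z = 0) : z = 0 := by
  have h2 := congrArg (fun t => c⁻¹ • t) h
  simpa [smul_smul, inv_mul_cancel₀ hc] using h2

open LozengeAlgebra in
/-- in a finite-dimensional lozenge algebra with Laplacian `Δ = dd* + d*d`
(adjoints `dS`, `delS`, `delbarS` of `d`, `∂`, `∂̄` taken with respect to the inner
products), harmonicity is characterized in each degree by:
for `a ∈ A⁰`: `Δa = 0 ⇔ ∂a = 0 ⇔ ∂̄a = 0`;
for `a ∈ A^{1,0}`: `Δa = 0 ⇔ ∂*a = 0 ⇔ ∂̄a = 0`;
for `a ∈ A^{0,1}`: `Δa = 0 ⇔ ∂a = 0 ⇔ ∂̄*a = 0`;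
for `a ∈ A²`: `Δa = 0 ⇔ ∂*a = 0 ⇔ ∂̄*a = 0`. -/
theorem lozenge_harmonicity_characterization
    (A : Type*) [Ring A] [Algebra ℂ A] [FiniteDimensional ℂ A]
    (Lz : LozengeAlgebra A)
    (dS delS delbarS : A → A)
    (hdS : ∀ u v : A, Lz.innerL (Lz.d u) v = Lz.innerL u (dS v))
    (hdelS : ∀ u v : A, Lz.innerL (Lz.del u) v = Lz.innerL u (delS v))
    (hdelbarS : ∀ u v : A, Lz.innerL (Lz.delbar u) v = Lz.innerL u (delbarS v)) :
    (∀ a ∈ Lz.A0,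
      (Lz.d (dS a) + dS (Lz.d a) = 0 ↔ Lz.del a = 0) ∧
      (Lz.d (dS a) + dS (Lz.d a) = 0 ↔ Lz.delbar a = 0)) ∧
    (∀ a ∈ Lz.A10,
      (Lz.d (dS a) + dS (Lz.d a) = 0 ↔ delS a = 0) ∧
      (Lz.d (dS a) + dS (Lz.d a) = 0 ↔ Lz.delbar a = 0)) ∧
    (∀ a ∈ Lz.A01,
      (Lz.d (dS a) + dS (Lz.d a) = 0 ↔ Lz.del a = 0) ∧
      (Lz.d (dS a) + dS (Lz.d a) = 0 ↔ delbarS a = 0)) ∧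
    (∀ a ∈ Lz.A2,
      (Lz.d (dS a) + dS (Lz.d a) = 0 ↔ delS a = 0) ∧
      (Lz.d (dS a) + dS (Lz.d a) = 0 ↔ delbarS a = 0)) := by
  have hneI : (-Complex.I) ≠ 0 := neg_ne_zero.mpr Complex.I_ne_zero
  refine ⟨?_, ?_, ?_, ?_⟩
  · -- degree 0
    intro a ha
    have hz : dS a = 0 := Lz.dS_zero_of_mem0 dS hdS ha
    have hiff : Lz.d (dS a) + dS (Lz.d a) = 0 ↔ Lz.d a = 0 := by
      rw [Lz.hodge dS hdS a]
      exact ⟨fun h => h.1, fun h => ⟨h, hz⟩⟩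
    constructor
    · rw [hiff, Lz.del_of_mem0 ha]
      exact Lz.d_eq_zero_iff_p10 ha
    · rw [hiff, Lz.delbar_of_mem0 ha]
      exact Lz.d_eq_zero_iff_p01 ha
  · -- degree (1,0)
    intro a ha
    have hf : dS a = Complex.I • Lz.Lam (Lz.d a) := Lz.dS_of_mem10 dS hdS ha
    have hrec : Lz.omega * Lz.Lam (Lz.d a) = Lz.d a := Lz.Lam_right_inv _ (Lz.d10_mem a ha)
    have hdiff : Lz.d a = 0 ↔ dS a = 0 := by
      constructor
      · intro h; rw [hf, h, map_zero, smul_zero]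
      · intro h
        rw [hf] at h
        have he : Lz.Lam (Lz.d a) = 0 := smul_cancel_aux Complex.I_ne_zero h
        rw [← hrec, he, mul_zero]
    have hiff : Lz.d (dS a) + dS (Lz.d a) = 0 ↔ Lz.d a = 0 := by
      rw [Lz.hodge dS hdS a]
      exact ⟨fun h => h.1, fun h => ⟨h, hdiff.mp h⟩⟩
    constructor
    · have hg : delS a = Complex.I • Lz.Lam (Lz.d a) := Lz.delS_of_mem10 delS hdelS ha
      rw [hiff]
      constructor
      · intro h; rw [hg, h, map_zero, smul_zero]
      · intro h
        rw [hg] at h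
        have he : Lz.Lam (Lz.d a) = 0 := smul_cancel_aux Complex.I_ne_zero h
        rw [← hrec, he, mul_zero]
    · rw [hiff, Lz.delbar_of_mem10 ha]
  · -- degree (0,1)
    intro a ha
    have hf : dS a = (-Complex.I) • Lz.Lam (Lz.d a) := Lz.dS_of_mem01 dS hdS ha
    have hrec : Lz.omega * Lz.Lam (Lz.d a) = Lz.d a := Lz.Lam_right_inv _ (Lz.d01_mem a ha)
    have hdiff : Lz.d a = 0 ↔ dS a = 0 := by
      constructor
      · intro h; rw [hf, h, map_zero, smul_zero]
      · intro h
        rw [hf] at h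
        have he : Lz.Lam (Lz.d a) = 0 := smul_cancel_aux hneI h
        rw [← hrec, he, mul_zero]
    have hiff : Lz.d (dS a) + dS (Lz.d a) = 0 ↔ Lz.d a = 0 := by
      rw [Lz.hodge dS hdS a]
      exact ⟨fun h => h.1, fun h => ⟨h, hdiff.mp h⟩⟩
    constructor
    · rw [hiff, Lz.del_of_mem01 ha]
    · have hg : delbarS a = (-Complex.I) • Lz.Lam (Lz.d a) :=
        Lz.delbarS_of_mem01 delbarS hdelbarS ha
      rw [hiff]
      constructor
      · intro h; rw [hg, h, map_zero, smul_zero]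
      · intro h
        rw [hg] at h
        have he : Lz.Lam (Lz.d a) = 0 := smul_cancel_aux hneI h
        rw [← hrec, he, mul_zero]
  · -- degree 2
    intro a ha
    have hda : Lz.d a = 0 := Lz.d2_zero a ha
    have hf := Lz.dS_of_mem2 dS hdS ha
    have hiff : Lz.d (dS a) + dS (Lz.d a) = 0 ↔ dS a = 0 := by
      rw [Lz.hodge dS hdS a]
      exact ⟨fun h => h.2, fun h => ⟨hda, h⟩⟩
    have hPQ := Lz.p10_d_eq_zero_iff (Lz.Lam_mem a)
    have hdS_iff : dS a = 0 ↔ Lz.p01 (Lz.d (Lz.Lam a)) = 0 := by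
      constructor
      · intro h
        have hsum0 : Complex.I • Lz.p10 (Lz.d (Lz.Lam a))
            + (-Complex.I) • Lz.p01 (Lz.d (Lz.Lam a)) = 0 := hf.symm.trans h
        have h2 := congrArg (fun t => Lz.p01 t) hsum0
        simp only [map_add, map_smul, map_zero,
          (Lz.proj_of_mem10 (Lz.p10_mem (Lz.d (Lz.Lam a)))).2.2.1,
          (Lz.proj_of_mem01 (Lz.p01_mem (Lz.d (Lz.Lam a)))).2.2.1,
          smul_zero, zero_add] at h2
        exact smul_cancel_aux hneI h2
      · intro h
        rw [hf, h, hPQ.mpr h, smul_zero, smul_zero, add_zero]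
    constructor
    · rw [hiff, hdS_iff]
      have hg := Lz.delS_of_mem2 delS hdelS ha
      constructor
      · intro h; rw [hg, h, smul_zero]
      · intro h; rw [hg] at h; exact smul_cancel_aux hneI h
    · rw [hiff, hdS_iff]
      have hg := Lz.delbarS_of_mem2 delbarS hdelbarS ha
      constructor
      · intro h; rw [hg, hPQ.mpr h, smul_zero]
      · intro h; rw [hg] at h; exact hPQ.mp (smul_cancel_aux Complex.I_ne_zero h)
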